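/- arXiv:0804.3069 — 2 statements merged into one kernel-verified Lean document; each statement's English description precedes it below -/
import Mathlib

section
/- Let T be a bounded self-adjoint operator on a complex Hilbert space H, U an open neighborhood of σ(T) with (−L, L)·U ⊆ U for some L > 0, and F : U → ℂ analytic. Then the map t ↦ F(tT) from (−L, L) to B(H) is differentiable in operator norm, with derivative d/dt F(tT) = T · F'(tT), where F' = dF/dλ and both F(tT) and F'(tT) are given by the continuous functional calculus of tT. -/
/-- With `T` bounded self-adjoint, `U ⊇ σ(T)` open with
`(−L,L)·U ⊆ U`, and `F` analytic on `U`, the map `t ↦ F(tT)` is differentiable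
in operator norm on `(−L, L)` with derivative `T · F'(tT)`. -/
theorem hasDerivAt_cfc_scaled
    {H : Type*} [NormedAddCommGroup H] [InnerProductSpace ℂ H] [CompleteSpace H]
    (T : H →L[ℂ] H) (hT : IsSelfAdjoint T)
    (U : Set ℂ) (hU : IsOpen U) (hspec : spectrum ℂ T ⊆ U)
    (L : ℝ) (hL : 0 < L)
    (hscale : ∀ t ∈ Set.Ioo (-L) L, ∀ z ∈ U, (t : ℂ) * z ∈ U)
    (F : ℂ → ℂ) (hF : AnalyticOn ℂ F U) :
    ∀ t ∈ Set.Ioo (-L) L,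
      HasDerivAt (fun s : ℝ => cfc F ((s : ℂ) • T))
        (T * cfc (deriv F) ((t : ℂ) • T)) t := by
  intro t ht
  obtain ⟨ht1, ht2⟩ := ht
  have hTn : IsStarNormal T := hT.isStarNormal
  have hFnhd : AnalyticOnNhd ℂ F U := (hU.analyticOn_iff_analyticOnNhd).mp hF
  have hFU : ContinuousOn F U := hFnhd.continuousOn
  have hF'U : ContinuousOn (deriv F) U := hFnhd.deriv.continuousOn
  set S : Set ℂ := spectrum ℂ T with hS
  have hScompact : IsCompact S := spectrum.isCompact T
  -- images of S under multiplication by scalars in (-L, L) stay in U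
  have himg : ∀ s ∈ Set.Ioo (-L) L, ((s : ℂ) * ·) '' S ⊆ U := by
    rintro s hs z ⟨x, hx, rfl⟩
    exact hscale s hs x (hspec hx)
  have hcont_s : ∀ s ∈ Set.Ioo (-L) L, ContinuousOn F (((s : ℂ) * ·) '' S) :=
    fun s hs => hFU.mono (himg s hs)
  have hcont_s' : ∀ s ∈ Set.Ioo (-L) L,
      ContinuousOn (fun x => F ((s : ℂ) * x)) S := by
    intro s hs
    exact (hcont_s s hs).comp (continuous_const.mul continuous_id).continuousOn
      (Set.mapsTo_image _ _)
  -- rewrite cfc F (s • T) via composition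
  have hg : ∀ s ∈ Set.Ioo (-L) L,
      cfc F ((s : ℂ) • T) = cfc (fun x => F ((s : ℂ) * x)) T := by
    intro s hs
    exact (cfc_comp_const_mul (s : ℂ) F T (hcont_s s hs) hTn).symm
  -- the derivative as a single cfc over T
  set ψ : ℂ → ℂ := fun x => x * deriv F ((t : ℂ) * x) with hψ
  have hcontψ' : ContinuousOn (fun x => deriv F ((t : ℂ) * x)) S :=
    (hF'U.mono (himg t ⟨ht1, ht2⟩)).comp
      (continuous_const.mul continuous_id).continuousOn (Set.mapsTo_image _ _)
  have hcontψ : ContinuousOn ψ S := continuousOn_id.mul hcontψ'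
  have hDeq : T * cfc (deriv F) ((t : ℂ) • T) = cfc ψ T := by
    have h1 : cfc (deriv F) ((t : ℂ) • T) = cfc (fun x => deriv F ((t : ℂ) * x)) T :=
      (cfc_comp_const_mul (t : ℂ) (deriv F) T
        (hF'U.mono (himg t ⟨ht1, ht2⟩)) hTn).symm
    have hmul : cfc ψ T = cfc (id : ℂ → ℂ) T * cfc (fun x => deriv F ((t : ℂ) * x)) T := by
      rw [← cfc_mul _ _ T continuousOn_id hcontψ']
      rfl
    rw [h1, hmul, cfc_id ℂ T hTn]
  rw [hDeq]
  rw [hasDerivAt_iff_isLittleO, Asymptotics.isLittleO_iff]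
  -- choose δ with [t-δ, t+δ] ⊆ (-L, L)
  set δ : ℝ := min (t + L) (L - t) / 2 with hδdef
  have hδ : 0 < δ := by
    have : 0 < min (t + L) (L - t) := lt_min (by linarith) (by linarith)
    positivity
  have hIcc : Set.Icc (t - δ) (t + δ) ⊆ Set.Ioo (-L) L := by
    intro u ⟨hu1, hu2⟩
    have h1 : δ ≤ (t + L) / 2 := by
      rw [hδdef]; gcongr; exact min_le_left _ _
    have h2 : δ ≤ (L - t) / 2 := by
      rw [hδdef]; gcongr; exact min_le_right _ _
    constructor <;> nlinarith
  -- compact set K and uniform continuity of deriv F on it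
  set K : Set ℂ := (fun p : ℝ × ℂ => (p.1 : ℂ) * p.2) ''
      (Set.Icc (t - δ) (t + δ) ×ˢ S) with hKdef
  have hKcomp : IsCompact K :=
    (isCompact_Icc.prod hScompact).image (by fun_prop)
  have hKU : K ⊆ U := by
    rintro z ⟨⟨u, x⟩, ⟨hu, hx⟩, rfl⟩
    exact hscale u (hIcc hu) x (hspec hx)
  have hmemK : ∀ u ∈ Set.Icc (t - δ) (t + δ), ∀ x ∈ S, (u : ℂ) * x ∈ K := by
    intro u hu x hx
    exact ⟨(u, x), ⟨hu, hx⟩, rfl⟩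
  have huc := hKcomp.uniformContinuousOn_of_continuous (hF'U.mono hKU)
  rw [Metric.uniformContinuousOn_iff] at huc
  set M : ℝ := ‖T‖ + 1 with hM
  have hM0 : 0 < M := by rw [hM]; positivity
  have hxM : ∀ x ∈ S, ‖x‖ < M := by
    intro x hx
    have h1 := spectrum.norm_le_norm_mul_of_mem hx
    have h2 : ‖(1 : H →L[ℂ] H)‖ ≤ 1 := ContinuousLinearMap.norm_id_le
    have h3 : (0:ℝ) ≤ ‖T‖ := norm_nonneg T
    rw [hM]
    nlinarith
  intro c hc
  obtain ⟨δ', hδ'0, hδ'⟩ := huc (c / M) (by positivity)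
  have hev1 : ∀ᶠ s in nhds t, s ∈ Set.Ioo (-L) L :=
    isOpen_Ioo.eventually_mem ⟨ht1, ht2⟩
  have hev2 : ∀ᶠ s in nhds t, |s - t| < min δ (δ' / M) :=
    eventually_abs_sub_lt t (lt_min hδ (by positivity))
  filter_upwards [hev1, hev2] with s hs hdist
  obtain ⟨hd1, hd2⟩ := lt_min_iff.mp hdist
  -- pointwise estimate on the spectrum
  have key : ∀ x ∈ S,
      ‖F ((s : ℂ) * x) - F ((t : ℂ) * x)
        - ((s : ℝ) - t : ℝ) • ψ x‖ ≤ c * |s - t| := by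
    intro x hx
    have hxMx := hxM x hx
    have hsubIcc : Set.uIcc t s ⊆ Set.Icc (t - δ) (t + δ) := by
      apply Set.uIcc_subset_Icc ⟨by linarith, by linarith⟩
      constructor
      · cases abs_sub_lt_iff.mp hd1 with
        | intro h1 h2 => linarith
      · cases abs_sub_lt_iff.mp hd1 with
        | intro h1 h2 => linarith
    -- derivative of u ↦ F(u x)
    have hder : ∀ u ∈ Set.uIcc t s,
        HasDerivAt (fun u : ℝ => F ((u : ℂ) * x)) (x * deriv F ((u : ℂ) * x)) u := by
      intro u hu
      have huU : (u : ℂ) * x ∈ U := hKU (hmemK u (hsubIcc hu) x hx)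
      have hFd : HasDerivAt F (deriv F ((u : ℂ) * x)) ((u : ℂ) * x) :=
        (hFnhd _ huU).differentiableAt.hasDerivAt
      have hin : HasDerivAt (fun w : ℂ => w * x) x (u : ℂ) := by
        simpa using (hasDerivAt_id (u : ℂ)).mul_const x
      have := (hFd.comp (u : ℂ) hin).comp_ofReal
      simpa [mul_comm] using this
    -- integrability of the derivative
    have hcontD : ContinuousOn (fun u : ℝ => x * deriv F ((u : ℂ) * x)) (Set.uIcc t s) := by
      apply ContinuousOn.mul continuousOn_const
      apply hF'U.comp
      · exact (Continuous.mul (by fun_prop) continuous_const).continuousOn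
      · intro u hu
        exact hKU (hmemK u (hsubIcc hu) x hx)
    have hint : IntervalIntegrable (fun u : ℝ => x * deriv F ((u : ℂ) * x))
        MeasureTheory.volume t s := hcontD.intervalIntegrable
    have hftc : ∫ u in t..s, x * deriv F ((u : ℂ) * x)
        = F ((s : ℂ) * x) - F ((t : ℂ) * x) :=
      intervalIntegral.integral_eq_sub_of_hasDerivAt hder hint
    have hconst : ∫ _ in t..s, x * deriv F ((t : ℂ) * x)
        = (s - t) • (x * deriv F ((t : ℂ) * x)) := intervalIntegral.integral_const _
    have hsplit : F ((s : ℂ) * x) - F ((t : ℂ) * x) - ((s : ℝ) - t : ℝ) • ψ x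
        = ∫ u in t..s, (x * deriv F ((u : ℂ) * x) - x * deriv F ((t : ℂ) * x)) := by
      rw [intervalIntegral.integral_sub hint (intervalIntegrable_const), hftc, hconst, hψ]
    rw [hsplit]
    have hbound : ∀ u ∈ Set.uIoc t s,
        ‖x * deriv F ((u : ℂ) * x) - x * deriv F ((t : ℂ) * x)‖ ≤ c := by
      intro u hu
      have hu' := Set.uIoc_subset_uIcc hu
      have hux : (u : ℂ) * x ∈ K := hmemK u (hsubIcc hu') x hx
      have htx : (t : ℂ) * x ∈ K :=
        hmemK t (Set.mem_Icc.mpr ⟨by linarith, by linarith⟩) x hx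
      have hdist2 : dist ((u : ℂ) * x) ((t : ℂ) * x) < δ' := by
        rw [dist_eq_norm]
        have : (u : ℂ) * x - (t : ℂ) * x = ((u - t : ℝ) : ℂ) * x := by push_cast; ring
        rw [this, norm_mul]
        have hut : |u - t| ≤ |s - t| := by
          have habs1 : s - t ≤ |s - t| := le_abs_self _
          have habs2 : t - s ≤ |s - t| := by rw [abs_sub_comm]; exact le_abs_self _
          have habs3 : (0 : ℝ) ≤ |s - t| := abs_nonneg _
          rcases Set.mem_uIcc.mp hu' with ⟨h1, h2⟩ | ⟨h1, h2⟩ <;>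
            (rw [abs_sub_le_iff]; constructor <;> linarith)
        have h1 : ‖((u - t : ℝ) : ℂ)‖ = |u - t| := by
          rw [Complex.norm_real, Real.norm_eq_abs]
        rw [h1]
        calc |u - t| * ‖x‖ ≤ |s - t| * M :=
              mul_le_mul hut (le_of_lt hxMx) (norm_nonneg _) (abs_nonneg _)
          _ < (δ' / M) * M := by
              apply mul_lt_mul_of_pos_right hd2 hM0
          _ = δ' := by field_simp
      have := hδ' _ hux _ htx hdist2
      rw [dist_eq_norm] at this
      calc ‖x * deriv F ((u : ℂ) * x) - x * deriv F ((t : ℂ) * x)‖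
          = ‖x‖ * ‖deriv F ((u : ℂ) * x) - deriv F ((t : ℂ) * x)‖ := by
            rw [← norm_mul, mul_sub]
        _ ≤ M * (c / M) :=
            mul_le_mul (le_of_lt hxMx) (le_of_lt this) (norm_nonneg _) (le_of_lt hM0)
        _ = c := by field_simp
    exact intervalIntegral.norm_integral_le_of_norm_le_const hbound
  -- assemble via cfc algebra
  have e1 : cfc F ((s : ℂ) • T) = cfc (fun x => F ((s : ℂ) * x)) T := hg s hs
  have e2 : cfc F ((t : ℂ) • T) = cfc (fun x => F ((t : ℂ) * x)) T := hg t ⟨ht1, ht2⟩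
  have e3 : (s - t) • cfc ψ T = cfc (fun x => (((s - t : ℝ)) : ℂ) * ψ x) T := by
    rw [cfc_const_mul _ ψ T hcontψ]
    rw [show (((s - t : ℝ)) : ℂ) = algebraMap ℝ ℂ (s - t) from rfl, algebraMap_smul]
  have e4 : cfc (fun x => F ((s : ℂ) * x)) T - cfc (fun x => F ((t : ℂ) * x)) T
      - cfc (fun x => (((s - t : ℝ)) : ℂ) * ψ x) T
      = cfc (fun x => F ((s : ℂ) * x) - F ((t : ℂ) * x)
          - (((s - t : ℝ)) : ℂ) * ψ x) T := by
    rw [← cfc_sub _ _ T (hcont_s' s hs) (hcont_s' t ⟨ht1, ht2⟩),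
        ← cfc_sub (fun x => F ((s : ℂ) * x) - F ((t : ℂ) * x))
          (fun x => (((s - t : ℝ)) : ℂ) * ψ x) T ((hcont_s' s hs).sub (hcont_s' t ⟨ht1, ht2⟩))
          (continuousOn_const.mul hcontψ)]
  rw [e1, e2, e3, e4]
  have hnorm : ‖s - t‖ = |s - t| := Real.norm_eq_abs _
  rw [hnorm]
  apply norm_cfc_le (by positivity)
  intro x hx
  have := key x hx
  have hrw : ((s : ℝ) - t : ℝ) • ψ x = (((s - t : ℝ)) : ℂ) * ψ x := by
    rw [Complex.real_smul]
  rw [hrw] at this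
  exact this
end

section
/- Let T be a bounded self-adjoint operator on a complex Hilbert space H, U an open neighborhood of σ(T) with (−L, L)·U ⊆ U, and F : U → ℂ analytic. Then for all u₁, u₂ ∈ (−L, L), T · ∫_{u₁}^{u₂} F'(tT) dt = F(u₂T) − F(u₁T), where the integral is the Bochner integral in B(H) of the norm-continuous map t ↦ F'(tT). -/
/-- With `T` bounded self-adjoint, `U ⊇ σ(T)` open with
`(−L,L)·U ⊆ U`, and `F` analytic on `U`, the Newton–Leibnitz formula
`T · ∫_{u₁}^{u₂} F'(tT) dt = F(u₂T) − F(u₁T)` holds for all `u₁, u₂ ∈ (−L, L)`,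
the integral being the Bochner integral in `B(H)`. -/
theorem newton_leibnitz_cfc
    {H : Type*} [NormedAddCommGroup H] [InnerProductSpace ℂ H] [CompleteSpace H]
    (T : H →L[ℂ] H) (hT : IsSelfAdjoint T)
    (U : Set ℂ) (hU : IsOpen U) (hspec : spectrum ℂ T ⊆ U)
    (L : ℝ) (hL : 0 < L)
    (hscale : ∀ t ∈ Set.Ioo (-L) L, ∀ z ∈ U, (t : ℂ) * z ∈ U)
    (F : ℂ → ℂ) (hF : AnalyticOn ℂ F U) :
    ∀ u₁ ∈ Set.Ioo (-L) L, ∀ u₂ ∈ Set.Ioo (-L) L,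
      T * (∫ t in u₁..u₂, cfc (deriv F) ((t : ℂ) • T)) =
        cfc F ((u₂ : ℂ) • T) - cfc F ((u₁ : ℂ) • T) := by
  intro u₁ hu₁ u₂ hu₂
  have hFn : AnalyticOnNhd ℂ F U := (hU.analyticOn_iff_analyticOnNhd).mp hF
  have hF' : AnalyticOnNhd ℂ (deriv F) U := hFn.deriv
  have hF'c : ContinuousOn (deriv F) U := hF'.continuousOn
  have hFc : ContinuousOn F U := hFn.continuousOn
  have hsub : Set.uIcc u₁ u₂ ⊆ Set.Ioo (-L) L := Set.ordConnected_Ioo.uIcc_subset hu₁ hu₂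
  set S := spectrum ℂ T with hS
  have hT' : IsStarNormal T := hT.isStarNormal
  have hmem : ∀ t ∈ Set.uIcc u₁ u₂, ∀ x ∈ S, (t : ℂ) * x ∈ U := fun t ht x hx =>
    hscale t (hsub ht) x (hspec hx)
  -- the jointly continuous kernel
  have hcont : Continuous fun p : (Set.uIcc u₁ u₂) × S =>
      deriv F (((p.1 : ℝ) : ℂ) * (p.2 : ℂ)) := by
    apply hF'c.comp_continuous
    · exact (Complex.continuous_ofReal.comp (continuous_subtype_val.comp continuous_fst)).mul
        (continuous_subtype_val.comp continuous_snd)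
    · rintro ⟨t, x⟩; exact hmem t t.2 x x.2
  let G : ℝ → C(S, ℂ) := fun t =>
    (ContinuousMap.curry ⟨_, hcont⟩) (Set.projIcc (u₁ ⊓ u₂) (u₁ ⊔ u₂) inf_le_sup t)
  have hG : Continuous G :=
    (ContinuousMap.curry ⟨_, hcont⟩).continuous.comp continuous_projIcc
  have hGeq : ∀ t ∈ Set.uIcc u₁ u₂, ∀ x : S, G t x = deriv F ((t : ℂ) * (x : ℂ)) := by
    intro t ht x
    simp [G, Set.projIcc_of_mem inf_le_sup ht]
    rfl
  -- the cfc homomorphism as a continuous linear map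
  let Φ : C(S, ℂ) →L[ℂ] (H →L[ℂ] H) :=
    { toLinearMap := (cfcHom hT' (R := ℂ)).toLinearMap, cont := cfcHom_continuous hT' }
  have hΦ : ∀ g : C(S, ℂ), Φ g = cfcHom hT' (R := ℂ) g := fun g => rfl
  -- step 1: rewrite the integrand
  have key1 : ∀ t ∈ Set.uIcc u₁ u₂, cfc (deriv F) ((t : ℂ) • T) = Φ (G t) := by
    intro t ht
    have himg : ContinuousOn (deriv F) (((t : ℂ) * ·) '' S) := by
      apply hF'c.mono
      rintro _ ⟨x, hx, rfl⟩
      exact hmem t ht x hx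
    have hcomp : ContinuousOn (fun x : ℂ => deriv F ((t : ℂ) * x)) S := by
      apply himg.comp (continuous_const.mul continuous_id).continuousOn
      exact fun x hx => ⟨x, hx, rfl⟩
    rw [← cfc_comp_const_mul (t : ℂ) (deriv F) T himg hT', cfc_apply _ T hT' hcomp, hΦ]
    congr 1
    ext x
    exact (hGeq t ht x).symm
  rw [intervalIntegral.integral_congr key1,
    Φ.intervalIntegral_comp_comm (hG.intervalIntegrable _ _)]
  -- pointwise FTC for the integrated continuous map
  have hXmem : ∀ (u : ℝ), u ∈ Set.Ioo (-L) L → ContinuousOn (fun x : ℂ => F ((u : ℂ) * x)) S := by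
    intro u hu
    apply (hFc.mono ?_).comp (continuous_const.mul continuous_id).continuousOn
      (fun x hx => Set.mem_image_of_mem _ hx)
    rintro _ ⟨x, hx, rfl⟩
    exact hscale u hu x (hspec hx)
  let g₁ : C(S, ℂ) := ⟨_, (hXmem u₁ hu₁).restrict⟩
  let g₂ : C(S, ℂ) := ⟨_, (hXmem u₂ hu₂).restrict⟩
  have key2 : ((ContinuousMap.id ℂ).restrict S) * (∫ t in u₁..u₂, G t) = g₂ - g₁ := by
    ext x
    have hIx : (∫ t in u₁..u₂, G t) x = ∫ t in u₁..u₂, G t x :=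
      ((ContinuousMap.evalCLM ℂ x).intervalIntegral_comp_comm
        (hG.intervalIntegrable _ _)).symm
    have hFTC : ∫ t in u₁..u₂, (x : ℂ) * deriv F ((t : ℂ) * x) =
        F ((u₂ : ℂ) * x) - F ((u₁ : ℂ) * x) := by
      apply intervalIntegral.integral_eq_sub_of_hasDerivAt
      · intro t ht
        have hU' : (t : ℂ) * x ∈ U := hmem t ht x x.2
        have hdF : HasDerivAt F (deriv F ((t : ℂ) * x)) ((t : ℂ) * x) :=
          (hFn _ hU').differentiableAt.hasDerivAt
        have hz : HasDerivAt (fun z : ℂ => F (z * (x : ℂ)))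
            (deriv F ((t : ℂ) * x) * (1 * (x : ℂ))) ((t : ℂ)) :=
          HasDerivAt.comp _ hdF ((hasDerivAt_id _).mul_const (x : ℂ))
        simpa [mul_comm] using hz.comp_ofReal
      · apply ContinuousOn.intervalIntegrable
        apply continuousOn_const.mul
        apply hF'c.comp ((Complex.continuous_ofReal.continuousOn).mul continuousOn_const)
        intro t ht
        exact hmem t ht x x.2
    calc ((ContinuousMap.id ℂ).restrict S * ∫ t in u₁..u₂, G t) x
        = (x : ℂ) * ∫ t in u₁..u₂, G t x := by
          simp [ContinuousMap.mul_apply, hIx]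
      _ = ∫ t in u₁..u₂, (x : ℂ) * G t x := (intervalIntegral.integral_const_mul _ _).symm
      _ = ∫ t in u₁..u₂, (x : ℂ) * deriv F ((t : ℂ) * x) := by
          apply intervalIntegral.integral_congr
          intro t ht
          simp only [hGeq t ht x]
      _ = F ((u₂ : ℂ) * x) - F ((u₁ : ℂ) * x) := hFTC
      _ = (g₂ - g₁) x := by simp [g₁, g₂]
  calc T * Φ (∫ t in u₁..u₂, G t)
      = Φ (((ContinuousMap.id ℂ).restrict S) * (∫ t in u₁..u₂, G t)) := by
        rw [hΦ, hΦ, map_mul, cfcHom_id hT']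
    _ = Φ g₂ - Φ g₁ := by rw [key2, map_sub]
    _ = cfc F ((u₂ : ℂ) • T) - cfc F ((u₁ : ℂ) • T) := by
        have h2 : Φ g₂ = cfc F ((u₂ : ℂ) • T) := by
          rw [hΦ, ← cfc_apply _ T hT' (hXmem u₂ hu₂)]
          exact cfc_comp_const_mul (u₂ : ℂ) F T (by
            apply hFc.mono; rintro _ ⟨x, hx, rfl⟩; exact hscale u₂ hu₂ x (hspec hx)) hT'
        have h1 : Φ g₁ = cfc F ((u₁ : ℂ) • T) := by
          rw [hΦ, ← cfc_apply _ T hT' (hXmem u₁ hu₁)]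
          exact cfc_comp_const_mul (u₁ : ℂ) F T (by
            apply hFc.mono; rintro _ ⟨x, hx, rfl⟩; exact hscale u₁ hu₁ x (hspec hx)) hT'
        rw [h1, h2]
end
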